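/- For the one-point compactification X* = X ∪ {α} of an uncountable discrete space X, the ideal O_α = {f ∈ C(X*) : α ∈ int Z(f)} is not a countable strongly annihilated ideal of C(X*). -/

import Mathlib

open ContinuousMap

/-- An ideal `I` is countable strongly annihilated if for each countable subset `S ⊆ I`
and each `b ∉ I` there exists `c` with `c * a = 0` for all `a ∈ S` but `c * b ≠ 0`. -/
def CountableStronglyAnnihilated {R : Type*} [CommRing R] (I : Ideal R) : Prop :=
  ∀ S : Set R, S.Countable → S ⊆ I → ∀ b ∉ I, ∃ c : R, (∀ a ∈ S, c * a = 0) ∧ c * b ≠ 0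

/-- The ideal `O_α = {f ∈ C(X*) : α ∈ int Z(f)}` of `C(X*)`, where `X*` is the
one-point compactification of `X` and `α` is the point at infinity. -/
def Oalpha (X : Type*) [TopologicalSpace X] : Ideal C(OnePoint X, ℝ) where
  carrier := {f | (OnePoint.infty : OnePoint X) ∈ interior {x | f x = 0}}
  zero_mem' := by
    simp only [Set.mem_setOf_eq, ContinuousMap.zero_apply]
    simp
  add_mem' := by
    intro f g hf hg
    have hsub : {x : OnePoint X | f x = 0} ∩ {x | g x = 0} ⊆ {x | (f + g) x = 0} := by
      rintro x ⟨h1, h2⟩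
      simp only [Set.mem_setOf_eq, ContinuousMap.add_apply] at *
      rw [h1, h2, add_zero]
    have h := interior_mono hsub
    rw [interior_inter] at h
    exact h ⟨hf, hg⟩
  smul_mem' := by
    intro c f hf
    have hsub : {x : OnePoint X | f x = 0} ⊆ {x | (c • f) x = 0} := by
      intro x hx
      simp only [Set.mem_setOf_eq] at *
      simp [hx]
    exact interior_mono hsub hf

section Aux
open scoped Classical

variable {X : Type*} [TopologicalSpace X] [DiscreteTopology X]

open OnePoint Filter

/-- The indicator of a single point of `X` inside `OnePoint X`. -/
noncomputable def deltaFn (a : X) : C(OnePoint X, ℝ) :=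
  OnePoint.continuousMapMkDiscrete (fun y => if y = a then (1 : ℝ) else 0) 0
    (by
      apply Filter.Tendsto.congr' (f₁ := fun _ => (0 : ℝ))
      · filter_upwards [(Set.finite_singleton a).eventually_cofinite_notMem] with y hy
        simp [Set.mem_singleton_iff] at hy
        simp [hy]
      · exact tendsto_const_nhds)

@[simp] lemma deltaFn_infty (a : X) : deltaFn a (∞ : OnePoint X) = 0 := rfl

@[simp] lemma deltaFn_coe (a y : X) :
    deltaFn a (y : OnePoint X) = if y = a then (1 : ℝ) else 0 := rfl

lemma deltaFn_mem (a : X) : deltaFn a ∈ Oalpha X := by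
  have hopen : IsOpen ({((a : OnePoint X))}ᶜ : Set (OnePoint X)) := by
    have : ({((a : OnePoint X))} : Set (OnePoint X)) = (↑) '' ({a} : Set X) := by simp
    rw [this]
    exact (OnePoint.isClosed_image_coe.2 ⟨isClosed_singleton, isCompact_singleton⟩).isOpen_compl
  have hsub : ({((a : OnePoint X))}ᶜ : Set (OnePoint X)) ⊆ {x | deltaFn a x = 0} := by
    intro z hz
    simp only [Set.mem_compl_iff, Set.mem_singleton_iff] at hz
    cases z with
    | infty => simp [deltaFn_infty]
    | coe y =>
      have : y ≠ a := fun h => hz (by rw [h])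
      simp [deltaFn_coe, this]
  have := interior_maximal hsub hopen
  exact this (by simp [Set.mem_compl_iff, (OnePoint.infty_ne_coe a)])

end Aux

/-- For the one-point compactification of an uncountable discrete space `X`, the ideal
`O_α` is not countable strongly annihilated. -/
theorem stmt16 {X : Type*} [TopologicalSpace X] [DiscreteTopology X] [Uncountable X] :
    ¬ CountableStronglyAnnihilated (Oalpha X) := by
  classical
  obtain ⟨x, hx⟩ : ∃ x : ℕ → X, Function.Injective x :=
    ⟨fun n => (Infinite.natEmbedding X) n, (Infinite.natEmbedding X).injective⟩
  -- the function b
  have htend : Filter.Tendsto (Function.extend x (fun n => ((n : ℝ) + 1)⁻¹) 0)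
      Filter.cofinite (nhds 0) := by
    rw [Metric.tendsto_nhds]
    intro ε hε
    rw [Filter.eventually_cofinite]
    have hfin : ({n : ℕ | ε ≤ ((n : ℝ) + 1)⁻¹}).Finite := by
      apply Set.Finite.subset (Set.finite_Icc 0 ⌈ε⁻¹⌉₊)
      intro n hn
      simp only [Set.mem_setOf_eq] at hn
      have h1 : (0:ℝ) < (n : ℝ) + 1 := by positivity
      have : (n : ℝ) + 1 ≤ ε⁻¹ := by
        rw [← inv_inv ((n:ℝ)+1)]
        exact inv_anti₀ hε hn
      constructor
      · exact Nat.zero_le n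
      · have : (n : ℝ) ≤ ε⁻¹ := by linarith
        calc n = ⌈(n:ℝ)⌉₊ := by simp
        _ ≤ ⌈ε⁻¹⌉₊ := Nat.ceil_le_ceil this
    apply Set.Finite.subset (hfin.image x)
    intro y hy
    simp only [Set.mem_setOf_eq, not_lt, dist_zero_right, Real.norm_eq_abs] at hy
    by_cases h : ∃ n, x n = y
    · obtain ⟨n, rfl⟩ := h
      rw [hx.extend_apply] at hy
      refine ⟨n, ?_, rfl⟩
      have : |((n:ℝ)+1)⁻¹| = ((n:ℝ)+1)⁻¹ := abs_of_pos (by positivity)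
      rw [this] at hy
      exact hy
    · rw [Function.extend_apply' _ _ _ h] at hy
      simp at hy
      linarith
  set b : C(OnePoint X, ℝ) :=
    OnePoint.continuousMapMkDiscrete (Function.extend x (fun n => ((n : ℝ) + 1)⁻¹) 0) 0 htend
    with hb
  have hb_infty : b (OnePoint.infty : OnePoint X) = 0 := rfl
  have hb_coe : ∀ y : X, b (y : OnePoint X) = Function.extend x (fun n => ((n : ℝ) + 1)⁻¹) 0 y :=
    fun y => rfl
  -- b ∉ Oalpha
  have hbnot : b ∉ Oalpha X := by
    intro hmem
    have h1 : {z : OnePoint X | b z = 0} ∈ nhds (OnePoint.infty : OnePoint X) :=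
      mem_nhds_iff.2 ⟨_, interior_subset, isOpen_interior, hmem⟩
    have h2 : ((↑) : X → OnePoint X) ⁻¹' {z | b z = 0} ∈ Filter.cofinite := by
      have := Filter.preimage_mem_comap (m := ((↑) : X → OnePoint X)) h1
      rwa [OnePoint.comap_coe_nhds_infty, Filter.coclosedCompact_eq_cocompact,
        Filter.cocompact_eq_cofinite X] at this
    rw [Filter.mem_cofinite] at h2
    have hsub : Set.range x ⊆ (((↑) : X → OnePoint X) ⁻¹' {z | b z = 0})ᶜ := by
      rintro _ ⟨n, rfl⟩
      simp only [Set.mem_compl_iff, Set.mem_preimage, Set.mem_setOf_eq, hb_coe, hx.extend_apply]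
      positivity
    exact (Set.infinite_range_of_injective hx) (h2.subset hsub)
  intro H
  obtain ⟨c, hc1, hc2⟩ := H (Set.range (fun n => deltaFn (x n)))
    (Set.countable_range _)
    (by rintro _ ⟨n, rfl⟩; exact deltaFn_mem (x n)) b hbnot
  apply hc2
  have hczero : ∀ n, c ((x n : OnePoint X)) = 0 := by
    intro n
    have := hc1 _ ⟨n, rfl⟩
    have := congrFun (congrArg DFunLike.coe this) ((x n : OnePoint X))
    simpa [deltaFn_coe] using this
  ext z
  cases z with
  | infty =>
    show c _ * b _ = _
    rw [hb_infty, mul_zero]; rfl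
  | coe y =>
    show c _ * b _ = _
    by_cases h : ∃ n, x n = y
    · obtain ⟨n, rfl⟩ := h
      rw [hczero n, zero_mul]; rfl
    · rw [hb_coe, Function.extend_apply' _ _ _ h]
      simp
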